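/- Let Z have the Laplace distribution with density p(z) = (1/(2b))·e^{−|z|/b} on ℝ with scale b > 0. Then for any shifts μ, μ′ ∈ ℝ and any measurable set S ⊆ ℝ, Pr[μ + Z ∈ S] ≤ e^{|μ−μ′|/b} · Pr[μ′ + Z ∈ S]. -/

import Mathlib

open MeasureTheory
open scoped ENNReal

/-- The Laplace distribution with scale `b`, given by its density
`(1/(2b)) * exp (-|z|/b)` with respect to Lebesgue measure. -/
noncomputable def laplaceMeasure (b : ℝ) : Measure ℝ :=
  volume.withDensity (fun z => ENNReal.ofReal (1 / (2 * b) * Real.exp (-|z| / b)))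

lemma withDensity_map_shift (f : ℝ → ℝ≥0∞) (c : ℝ) :
    (volume.withDensity f).map (fun z => c + z) =
      volume.withDensity (fun z => f (z - c)) := by
  ext s hs
  rw [Measure.map_apply (measurable_const_add c) hs,
    withDensity_apply _ (hs.preimage (measurable_const_add c)),
    withDensity_apply _ hs,
    ← lintegral_indicator (hs.preimage (measurable_const_add c)) _,
    ← lintegral_indicator hs _]
  have h : ∀ z : ℝ, ((fun z => c + z) ⁻¹' s).indicator f z =
      s.indicator (fun w => f (w - c)) (c + z) := by
    intro z
    by_cases hz : c + z ∈ s <;>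
      simp [Set.indicator, hz, Set.mem_preimage]
  simp_rw [h]
  exact lintegral_add_left_eq_self (fun w => s.indicator (fun w => f (w - c)) w) c

theorem laplace_shift_likelihood_ratio (b : ℝ) (hb : 0 < b) (μ μ' : ℝ)
    (S : Set ℝ) (hS : MeasurableSet S) :
    (laplaceMeasure b).map (fun z => μ + z) S ≤
      ENNReal.ofReal (Real.exp (|μ - μ'| / b)) *
        (laplaceMeasure b).map (fun z => μ' + z) S := by
  unfold laplaceMeasure
  rw [withDensity_map_shift, withDensity_map_shift,
    withDensity_apply _ hS, withDensity_apply _ hS, ← lintegral_const_mul']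
  · refine setLIntegral_mono' hS fun z _ => ?_
    rw [← ENNReal.ofReal_mul (Real.exp_nonneg _)]
    apply ENNReal.ofReal_le_ofReal
    have h1 : (0:ℝ) < 1 / (2 * b) := by positivity
    rw [← mul_assoc, mul_comm (Real.exp _), mul_assoc]
    apply mul_le_mul_of_nonneg_left _ h1.le
    rw [← Real.exp_add]
    apply Real.exp_le_exp.2
    rw [← add_div, div_le_div_iff_of_pos_right hb]
    have := abs_sub_abs_le_abs_sub (z - μ') (z - μ)
    have h2 : |(z - μ') - (z - μ)| = |μ - μ'| := by
      rw [show (z - μ') - (z - μ) = μ - μ' by ring]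
    linarith
  · exact ENNReal.ofReal_ne_top
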